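/- Let A be a complex unital Banach algebra, a, b, c ∈ A, and suppose that, as t → 0 in ℝ, exp(t • a) * exp(t • b) * exp(-(t • a)) * exp(-(t • b)) - exp(t^2 • c) = o(t^2). Then a*b - b*a = c. (Extraction of the boost-translation commutator from the central holonomy of infinitesimal loops.) -/

import Mathlib

open NormedSpace Asymptotics Filter

section Aux

variable {A : Type*} [NormedRing A] [NormedAlgebra ℂ A] [CompleteSpace A]
    [NormedSpace ℝ A] [IsScalarTower ℝ ℂ A]

private lemma rsmul (t : ℝ) (x : A) : t • x = ((t : ℂ)) • x := by
  rw [Algebra.smul_def, Algebra.smul_def, IsScalarTower.algebraMap_apply ℝ ℂ A]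
  norm_num

private lemma pow_smul_littleO (k : ℕ) (hk : 2 < k) (w : A) :
    (fun t : ℝ => ((t : ℂ)) ^ k • w) =o[nhds (0 : ℝ)] (fun t : ℝ => t ^ 2) := by
  have h1 : (fun t : ℝ => ((t : ℂ)) ^ k • w) =O[nhds (0 : ℝ)] (fun t : ℝ => t ^ k) := by
    rw [Asymptotics.isBigO_iff]
    refine ⟨‖w‖, by filter_upwards with t; rw [norm_smul]; simp [mul_comm]⟩
  exact h1.trans_isLittleO (isLittleO_pow_pow hk)

private lemma exp_expand (x : A) :
    (fun t : ℝ => exp (((t : ℂ)) • x)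
        - (1 + ((t : ℂ)) • x + ((t : ℂ)) ^ 2 • ((2⁻¹ : ℂ) • (x * x))))
      =o[nhds (0 : ℝ)] (fun t : ℝ => t ^ 2) := by
  have H := (exp_hasFPowerSeriesAt_zero (𝕂 := ℂ) (𝔸 := A)).isBigO_sub_partialSum_pow 3
  have htend : Filter.Tendsto (fun t : ℝ => ((t : ℂ)) • x) (nhds 0) (nhds (0 : A)) := by
    have : Continuous (fun t : ℝ => ((t : ℂ)) • x) :=
      (Complex.continuous_ofReal).smul continuous_const
    simpa using this.tendsto 0
  have H2 := H.comp_tendsto htend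
  have hps : ∀ y : A, (expSeries ℂ A).partialSum 3 y = 1 + y + (2⁻¹ : ℂ) • (y * y) := by
    intro y
    simp [FormalMultilinearSeries.partialSum, Finset.sum_range_succ, expSeries_apply_eq,
      pow_two]
  have H3 : (fun t : ℝ => exp (((t : ℂ)) • x)
      - (1 + ((t : ℂ)) • x + ((t : ℂ)) ^ 2 • ((2⁻¹ : ℂ) • (x * x))))
      =O[nhds (0 : ℝ)] (fun t : ℝ => ‖((t : ℂ)) • x‖ ^ 3) := by
    refine H2.congr' ?_ (by rfl)
    filter_upwards with t
    simp only [Function.comp, hps, zero_add]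
    congr 2
    rw [smul_comm, smul_mul_smul_comm, pow_two]
  refine H3.trans_isLittleO ?_
  have h1 : (fun t : ℝ => ‖((t : ℂ)) • x‖ ^ 3) =O[nhds (0 : ℝ)] (fun t : ℝ => t ^ 3) := by
    rw [Asymptotics.isBigO_iff]
    refine ⟨‖x‖ ^ 3, ?_⟩
    filter_upwards with t
    rw [norm_smul, mul_pow]
    simp [abs_pow, mul_comm]
  exact h1.trans_isLittleO (isLittleO_pow_pow (by norm_num))

private lemma poly_mul (z : ℂ) (u v u' v' : A) :
    (1 + z • u + z ^ 2 • v) * (1 + z • u' + z ^ 2 • v')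
      = (1 + z • (u + u') + z ^ 2 • (v + v' + u * u'))
        + (z ^ 3 • (u * v' + v * u') + z ^ 4 • (v * v')) := by
  simp only [mul_add, add_mul, one_mul, mul_one, smul_mul_assoc, mul_smul_comm,
    smul_smul, smul_add]
  module

private lemma mul_expand {f g : ℝ → A} {u v u' v' : A}
    (hf : (fun t : ℝ => f t - (1 + ((t : ℂ)) • u + ((t : ℂ)) ^ 2 • v))
      =o[nhds (0 : ℝ)] (fun t : ℝ => t ^ 2))
    (hg : (fun t : ℝ => g t - (1 + ((t : ℂ)) • u' + ((t : ℂ)) ^ 2 • v'))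
      =o[nhds (0 : ℝ)] (fun t : ℝ => t ^ 2)) :
    (fun t : ℝ => f t * g t
        - (1 + ((t : ℂ)) • (u + u') + ((t : ℂ)) ^ 2 • (v + v' + u * u')))
      =o[nhds (0 : ℝ)] (fun t : ℝ => t ^ 2) := by
  have hPc : Continuous (fun t : ℝ => 1 + ((t : ℂ)) • u + ((t : ℂ)) ^ 2 • v) := by
    apply Continuous.add
    apply Continuous.add continuous_const
    · exact (Complex.continuous_ofReal).smul continuous_const
    · exact ((Complex.continuous_ofReal).pow 2).smul continuous_const
  have hQc : Continuous (fun t : ℝ => 1 + ((t : ℂ)) • u' + ((t : ℂ)) ^ 2 • v') := by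
    apply Continuous.add
    apply Continuous.add continuous_const
    · exact (Complex.continuous_ofReal).smul continuous_const
    · exact ((Complex.continuous_ofReal).pow 2).smul continuous_const
  have hP : (fun t : ℝ => 1 + ((t : ℂ)) • u + ((t : ℂ)) ^ 2 • v)
      =O[nhds (0 : ℝ)] (fun _ : ℝ => (1 : ℝ)) := (hPc.tendsto 0).isBigO_one ℝ
  have hgO : g =O[nhds (0 : ℝ)] (fun _ : ℝ => (1 : ℝ)) := by
    have h0 : Filter.Tendsto (fun t : ℝ => g t - (1 + ((t : ℂ)) • u' + ((t : ℂ)) ^ 2 • v'))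
        (nhds 0) (nhds (0 : A)) :=
      hg.tendsto_zero_of_tendsto (by simpa using ((continuous_pow 2).tendsto (0 : ℝ)))
    have hgt : Filter.Tendsto g (nhds (0 : ℝ)) (nhds ((0 : A) + (1 + (0:ℂ) • u' + (0:ℂ)^2 • v'))) := by
      have := h0.add (hQc.tendsto 0)
      simp only [Complex.ofReal_zero] at this
      convert this using 2 with t
      abel
    refine hgt.isBigO_one ℝ
  have t1 : (fun t : ℝ => (f t - (1 + ((t : ℂ)) • u + ((t : ℂ)) ^ 2 • v)) * g t)
      =o[nhds (0 : ℝ)] (fun t : ℝ => t ^ 2) := by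
    simpa using hf.mul_isBigO hgO
  have t2 : (fun t : ℝ => (1 + ((t : ℂ)) • u + ((t : ℂ)) ^ 2 • v)
      * (g t - (1 + ((t : ℂ)) • u' + ((t : ℂ)) ^ 2 • v')))
      =o[nhds (0 : ℝ)] (fun t : ℝ => t ^ 2) := by
    simpa using hP.mul_isLittleO hg
  have t3 : (fun t : ℝ => ((t : ℂ)) ^ 3 • (u * v' + v * u') + ((t : ℂ)) ^ 4 • (v * v'))
      =o[nhds (0 : ℝ)] (fun t : ℝ => t ^ 2) :=
    (pow_smul_littleO 3 (by norm_num) _).add (pow_smul_littleO 4 (by norm_num) _)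
  have := (t1.add t2).add t3
  refine this.congr' ?_ (by rfl)
  filter_upwards with t
  have key := poly_mul ((t : ℂ)) u v u' v'
  have expand : (f t - (1 + ((t : ℂ)) • u + ((t : ℂ)) ^ 2 • v)) * g t
      + (1 + ((t : ℂ)) • u + ((t : ℂ)) ^ 2 • v)
        * (g t - (1 + ((t : ℂ)) • u' + ((t : ℂ)) ^ 2 • v'))
      = f t * g t - (1 + ((t : ℂ)) • u + ((t : ℂ)) ^ 2 • v)
        * (1 + ((t : ℂ)) • u' + ((t : ℂ)) ^ 2 • v') := by
    rw [sub_mul, mul_sub]; abel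
  rw [expand, key]
  abel

end Aux

/-- Extraction of the commutator from the central holonomy of infinitesimal loops:
if `exp(ta) exp(tb) exp(-ta) exp(-tb) - exp(t² c) = o(t²)` as `t → 0`, then `[a,b] = c`. -/
theorem stmt_7
    {A : Type*} [NormedRing A] [NormedAlgebra ℂ A] [CompleteSpace A]
    [NormedSpace ℝ A] [IsScalarTower ℝ ℂ A]
    (a b c : A)
    (h : (fun t : ℝ =>
        exp (t • a) * exp (t • b) * exp (-(t • a)) * exp (-(t • b))
          - exp (t ^ 2 • c))
      =o[nhds (0 : ℝ)] (fun t : ℝ => t ^ 2)) :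
    a * b - b * a = c := by
  have hF := mul_expand (exp_expand a) (exp_expand b)
  have hG := mul_expand (exp_expand (-a)) (exp_expand (-b))
  have hH := mul_expand hF hG
  -- rewrite the product into the shape of `h`
  have hH' : (fun t : ℝ =>
      exp (t • a) * exp (t • b) * exp (-(t • a)) * exp (-(t • b))
        - (1 + t ^ 2 • (a * b - b * a))) =o[nhds (0 : ℝ)] (fun t : ℝ => t ^ 2) := by
    refine hH.congr' ?_ (by rfl)
    filter_upwards with t
    have e1 : ((t : ℂ)) • (-a : A) = -(t • a) := by rw [smul_neg, rsmul]
    have e2 : ((t : ℂ)) • (-b : A) = -(t • b) := by rw [smul_neg, rsmul]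
    have e3 : ((t : ℂ)) • a = t • a := (rsmul t a).symm
    have e4 : ((t : ℂ)) • b = t • b := (rsmul t b).symm
    have h0 : a + b + (-a + -b) = (0 : A) := by abel
    have h5 : (2⁻¹ : ℂ) • (a * a) + (2⁻¹ : ℂ) • (b * b) + a * b
        + ((2⁻¹ : ℂ) • (-a * -a) + (2⁻¹ : ℂ) • (-b * -b) + -a * -b)
        + (a + b) * (-a + -b) = a * b - b * a := by
      simp only [neg_mul_neg, mul_add, add_mul, mul_neg, neg_mul]
      module
    rw [e1, e2, e3, e4, ← mul_assoc, h0, smul_zero, add_zero, h5,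
      rsmul (t ^ 2) (a * b - b * a), Complex.ofReal_pow]
  -- expansion of exp (t² • c)
  have hE : (fun t : ℝ => exp (t ^ 2 • c) - (1 + t ^ 2 • c))
      =o[nhds (0 : ℝ)] (fun t : ℝ => t ^ 2) := by
    have hsq : Filter.Tendsto (fun t : ℝ => t ^ 2) (nhds 0) (nhds (0 : ℝ)) := by
      simpa using (continuous_pow 2).tendsto (0 : ℝ)
    have H := (exp_expand c).comp_tendsto hsq
    have H1 : (fun t : ℝ => exp (t ^ 2 • c)
        - (1 + (((t : ℂ)) ^ 2) • c + (((t : ℂ)) ^ 2) ^ 2 • ((2⁻¹ : ℂ) • (c * c))))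
        =O[nhds (0 : ℝ)] (fun t : ℝ => (t ^ 2) ^ 2) := by
      refine H.isBigO.congr' ?_ (by rfl)
      filter_upwards with t
      simp only [Function.comp]
      rw [rsmul (t ^ 2) c]
      push_cast
      ring_nf
    have H2 : (fun t : ℝ => exp (t ^ 2 • c)
        - (1 + (((t : ℂ)) ^ 2) • c + (((t : ℂ)) ^ 2) ^ 2 • ((2⁻¹ : ℂ) • (c * c))))
        =o[nhds (0 : ℝ)] (fun t : ℝ => t ^ 2) := by
      refine H1.trans_isLittleO ?_
      have : (fun t : ℝ => (t ^ 2) ^ 2) = (fun t : ℝ => t ^ 4) := by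
        funext t; ring
      rw [this]
      exact isLittleO_pow_pow (by norm_num)
    have H4 : (fun t : ℝ => (((t : ℂ)) ^ 2) ^ 2 • ((2⁻¹ : ℂ) • (c * c)))
        =o[nhds (0 : ℝ)] (fun t : ℝ => t ^ 2) := by
      have := pow_smul_littleO 4 (by norm_num) ((2⁻¹ : ℂ) • (c * c)) (A := A)
      refine this.congr' ?_ (by rfl)
      filter_upwards with t
      ring_nf
    have := H2.add H4
    refine this.congr' ?_ (by rfl)
    filter_upwards with t
    rw [rsmul (t ^ 2) c]
    push_cast
    abel
  -- combine
  have hD := (h.add hE).sub hH'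
  have hD' : (fun t : ℝ => t ^ 2 • (a * b - b * a - c)) =o[nhds (0 : ℝ)] (fun t : ℝ => t ^ 2) := by
    refine hD.congr' ?_ (by rfl)
    filter_upwards with t
    rw [rsmul (t ^ 2) (a * b - b * a - c), rsmul (t ^ 2) c, rsmul (t ^ 2) (a * b - b * a)]
    module
  -- extract
  by_contra hne
  have hd : (0 : ℝ) < ‖a * b - b * a - c‖ := by
    rw [norm_pos_iff, sub_ne_zero]; exact hne
  rw [Asymptotics.isLittleO_iff] at hD'
  have hev := hD' (half_pos hd)
  obtain ⟨t, ht, htne⟩ := ((hev.filter_mono nhdsWithin_le_nhds).and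
    (eventually_mem_nhdsWithin (s := {(0 : ℝ)}ᶜ) (a := 0))).exists
  rw [rsmul (t ^ 2), norm_smul] at ht
  have ht2 : (0 : ℝ) < ‖t ^ 2‖ := by
    simp only [Real.norm_eq_abs, abs_pos]
    exact pow_ne_zero 2 htne
  have hnc : ‖((t ^ 2 : ℝ) : ℂ)‖ = ‖t ^ 2‖ := by
    simp
  rw [hnc] at ht
  nlinarith [ht]
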